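/- Let 0 < α ≤ 1 and let b ∈ L^∞(R^n) be supported in the cube Q = Q(x_0, r) with ∫_{R^n} b(x) dx = 0. Then for every x with |x − x_0| > √n · r, the intrinsic square function satisfies S_α(b)(x) ≤ C · ‖b‖_{L^∞} · r^{n+α} / |x − x_0|^{n+α}, where C depends only on n and α. -/

import Mathlib

open MeasureTheory Metric Set

noncomputable section

abbrev En (n : ℕ) := EuclideanSpace ℝ (Fin n)

/-- The axis-parallel cube centered at `x0` with side length `r`. -/
def cube (n : ℕ) (x0 : En n) (r : ℝ) : Set (En n) := {x | ∀ i, |x i - x0 i| ≤ r / 2}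

/-- Weighted measure of a set: `w(E) = ∫_E w`. -/
def wSet (n : ℕ) (w : En n → ℝ) (E : Set (En n)) : ℝ := ∫ x in E, w x

/-- The Muckenhoupt `A_q` integral condition for `q > 1` with constant `C`. -/
def AqCond (n : ℕ) (w : En n → ℝ) (q C : ℝ) : Prop :=
  ∀ (x0 : En n) (r : ℝ), 0 < r →
    ((∫ x in cube n x0 r, w x) / r ^ n) *
      ((∫ x in cube n x0 r, w x ^ (-(1 / (q - 1)))) / r ^ n) ^ (q - 1) ≤ C

/-- The Muckenhoupt `A_1` condition with constant `C`. -/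
def A1Cond (n : ℕ) (w : En n → ℝ) (C : ℝ) : Prop :=
  ∀ (x0 : En n) (r : ℝ), 0 < r →
    (∫ x in cube n x0 r, w x) / r ^ n ≤
      C * essInf w (volume.restrict (cube n x0 r))

/-- `w` is an `A_q` weight (`q ≥ 1`) with constant `C`. -/
def IsAq (n : ℕ) (w : En n → ℝ) (q C : ℝ) : Prop :=
  (∀ x, 0 ≤ w x) ∧ LocallyIntegrable w ∧
    ((q = 1 ∧ A1Cond n w C) ∨ (1 < q ∧ AqCond n w q C))

/-- The dilation `φ_t(x) = t^{-n} φ(x/t)`. -/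
def dilate (n : ℕ) (φ : En n → ℝ) (t : ℝ) (x : En n) : ℝ :=
  t ^ (-(n : ℝ)) * φ (t⁻¹ • x)

/-- The family `C_α`: supported in the unit ball, zero mean, `α`-Hölder constant ≤ 1. -/
def Calpha (n : ℕ) (α : ℝ) : Set (En n → ℝ) :=
  {φ | (∀ x, 1 < ‖x‖ → φ x = 0) ∧ (∫ x, φ x) = 0 ∧
    ∀ x x', |φ x - φ x'| ≤ ‖x - x'‖ ^ α}

/-- `A_α(f)(y,t) = sup_{φ ∈ C_α} |f * φ_t(y)|`. -/
def Aalpha (n : ℕ) (α : ℝ) (f : En n → ℝ) (y : En n) (t : ℝ) : ℝ :=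
  sSup {v | ∃ φ ∈ Calpha n α, v = |∫ z, f z * dilate n φ t (y - z)|}

/-- The varying-aperture intrinsic square function `S_{α,β}(f)`. -/
def SalphaBeta (n : ℕ) (α β : ℝ) (f : En n → ℝ) (x : En n) : ℝ :=
  Real.sqrt (∫ t in Ioi (0 : ℝ), ∫ y in ball x (β * t),
    (Aalpha n α f y t) ^ 2 / t ^ (n + 1))

/-- The intrinsic square function `S_α(f)` (aperture one). -/
def Salpha (n : ℕ) (α : ℝ) (f : En n → ℝ) (x : En n) : ℝ :=
  SalphaBeta n α 1 f x

/-- The intrinsic `g^*_λ` function. -/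
def gStar (n : ℕ) (α lam : ℝ) (f : En n → ℝ) (x : En n) : ℝ :=
  Real.sqrt (∫ t in Ioi (0 : ℝ), ∫ y,
    (t / (t + dist x y)) ^ (lam * n) * (Aalpha n α f y t) ^ 2 / t ^ (n + 1))

/-- The intrinsic Littlewood–Paley `g`-function. -/
def gLittle (n : ℕ) (α : ℝ) (f : En n → ℝ) (x : En n) : ℝ :=
  Real.sqrt (∫ t in Ioi (0 : ℝ), (Aalpha n α f x t) ^ 2 / t)

section AuxLemmas

variable {n : ℕ} {α : ℝ}

lemma calpha_vanish {φ : En n → ℝ} (hφ : φ ∈ Calpha n α) {x : En n} (hx : 1 < ‖x‖) : φ x = 0 :=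
  hφ.1 x hx

lemma calpha_holder {φ : En n → ℝ} (hφ : φ ∈ Calpha n α) (x x' : En n) :
    |φ x - φ x'| ≤ ‖x - x'‖ ^ α := hφ.2.2 x x'

lemma calpha_continuous (hα0 : 0 < α) {φ : En n → ℝ} (hφ : φ ∈ Calpha n α) : Continuous φ := by
  rw [continuous_iff_continuousAt]
  intro x
  rw [ContinuousAt, tendsto_iff_dist_tendsto_zero]
  have h1 : Filter.Tendsto (fun x' : En n => ‖x' - x‖ ^ α) (nhds x) (nhds 0) := by
    have h2 : Filter.Tendsto (fun x' : En n => ‖x' - x‖) (nhds x) (nhds 0) := by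
      have := (continuous_norm.comp (continuous_id.sub continuous_const) : Continuous fun x' : En n => ‖x' - x‖)
      simpa [Function.comp_def] using this.tendsto x
    have h3 : ContinuousAt (fun s : ℝ => s ^ α) 0 :=
      Real.continuousAt_rpow_const 0 α (Or.inr hα0.le)
    have := h3.tendsto.comp h2
    simpa [Real.zero_rpow hα0.ne', Function.comp_def] using this
  refine squeeze_zero (fun x' => dist_nonneg) (fun x' => ?_) h1
  rw [Real.dist_eq]
  exact calpha_holder hφ x' x

lemma calpha_abs_le (hn : 1 ≤ n) (hα0 : 0 < α) (hα1 : α ≤ 1) {φ : En n → ℝ}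
    (hφ : φ ∈ Calpha n α) (u : En n) : |φ u| ≤ 4 := by
  by_cases hu : 1 < ‖u‖
  · rw [calpha_vanish hφ hu]; norm_num
  push_neg at hu
  set e : En n := EuclideanSpace.single (⟨0, hn⟩ : Fin n) (2 + 2 * ‖u‖) with he
  have hne : ‖e‖ = 2 + 2 * ‖u‖ := by
    rw [he, EuclideanSpace.norm_single]
    have : (0:ℝ) ≤ 2 + 2 * ‖u‖ := by positivity
    rwa [Real.norm_eq_abs, abs_of_nonneg]
  have hbig : 1 < ‖u + e‖ := by
    have h1 : ‖e‖ ≤ ‖u + e‖ + ‖u‖ := by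
      have := norm_sub_le (u + e) u
      simpa [add_sub_cancel_left] using this
    have := norm_nonneg u
    linarith [hne.symm.trans_le h1]
  have h0 : φ (u + e) = 0 := calpha_vanish hφ hbig
  have h2 := calpha_holder hφ u (u + e)
  rw [h0, sub_zero] at h2
  have h3 : ‖u - (u + e)‖ = ‖e‖ := by
    rw [sub_add_eq_sub_sub, sub_self, zero_sub, norm_neg]
  rw [h3, hne] at h2
  have h4 : (2 + 2 * ‖u‖ : ℝ) ≤ 4 := by nlinarith [norm_nonneg u]
  calc |φ u| ≤ (2 + 2 * ‖u‖) ^ α := h2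
    _ ≤ 4 ^ α := by
        apply Real.rpow_le_rpow (by positivity) h4 hα0.le
    _ ≤ 4 ^ (1:ℝ) := by
        apply Real.rpow_le_rpow_of_exponent_le (by norm_num) hα1
    _ = 4 := by norm_num

lemma zero_mem_calpha (hα0 : 0 < α) : (0 : En n → ℝ) ∈ Calpha n α := by
  refine ⟨fun x _ => rfl, by simp, fun x x' => ?_⟩
  simp [Real.rpow_nonneg (norm_nonneg _)]

lemma Aalpha_nonneg (f : En n → ℝ) (y : En n) (t : ℝ) : 0 ≤ Aalpha n α f y t := by
  apply Real.sSup_nonneg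
  rintro v ⟨φ, hφ, rfl⟩
  exact abs_nonneg _

lemma cube_measurableSet (x0 : En n) (r : ℝ) : MeasurableSet (cube n x0 r) := by
  have : cube n x0 r = ⋂ i, {x : En n | |x i - x0 i| ≤ r / 2} := by
    ext x; simp [cube]
  rw [this]
  refine MeasurableSet.iInter fun i => ?_
  have : Measurable fun x : En n => |x i - x0 i| :=
    ((measurable_pi_apply i).comp (MeasurableEquiv.toLp 2 (Fin n → ℝ)).symm.measurable
      |>.sub measurable_const).abs
  exact measurableSet_le this measurable_const

lemma norm_le_of_mem_cube {x0 : En n} {r : ℝ} (hr : 0 ≤ r) {z : En n}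
    (hz : z ∈ cube n x0 r) : ‖z - x0‖ ≤ Real.sqrt n * r / 2 := by
  have h1 : ‖z - x0‖ = Real.sqrt (∑ i, ‖(z - x0) i‖ ^ 2) := EuclideanSpace.norm_eq _
  rw [h1]
  have h2 : ∑ i, ‖(z - x0) i‖ ^ 2 ≤ (n : ℝ) * (r / 2) ^ 2 := by
    calc ∑ i, ‖(z - x0) i‖ ^ 2 ≤ ∑ _i : Fin n, (r / 2) ^ 2 := by
          apply Finset.sum_le_sum
          intro i _
          have h3 : ‖(z - x0) i‖ = |z i - x0 i| := by
            simp [Real.norm_eq_abs]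
          rw [h3]
          have := hz i
          have h4 : (0:ℝ) ≤ |z i - x0 i| := abs_nonneg _
          nlinarith
      _ = (n : ℝ) * (r / 2) ^ 2 := by simp [Finset.sum_const, Finset.card_univ, mul_comm]
  calc Real.sqrt (∑ i, ‖(z - x0) i‖ ^ 2) ≤ Real.sqrt ((n : ℝ) * (r / 2) ^ 2) :=
        Real.sqrt_le_sqrt h2
    _ = Real.sqrt n * (r / 2) := by
        rw [Real.sqrt_mul (Nat.cast_nonneg n), Real.sqrt_sq (by positivity)]
    _ = Real.sqrt n * r / 2 := by ring

end AuxLemmas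
section AuxLemmas2

variable {n : ℕ} {α : ℝ}

lemma dilate_continuous (hα0 : 0 < α) {φ : En n → ℝ} (hφ : φ ∈ Calpha n α)
    {t : ℝ} (y : En n) : Continuous fun z : En n => dilate n φ t (y - z) := by
  unfold dilate
  exact continuous_const.mul ((calpha_continuous hα0 hφ).comp
    (by fun_prop : Continuous fun z : En n => t⁻¹ • (y - z)))

lemma dilate_sub_bound (hα0 : 0 < α) {φ : En n → ℝ} (hφ : φ ∈ Calpha n α)
    {t : ℝ} (ht : 0 < t) (w w' : En n) :
    |dilate n φ t w - dilate n φ t w'| ≤ t ^ (-(n : ℝ)) * (‖w - w'‖ / t) ^ α := by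
  unfold dilate
  rw [← mul_sub, abs_mul, abs_of_nonneg (Real.rpow_nonneg ht.le _)]
  refine mul_le_mul_of_nonneg_left ?_ (Real.rpow_nonneg ht.le _)
  have h := calpha_holder hφ (t⁻¹ • w) (t⁻¹ • w')
  have heq : ‖t⁻¹ • w - t⁻¹ • w'‖ = ‖w - w'‖ / t := by
    rw [← smul_sub, norm_smul, Real.norm_eq_abs, abs_of_nonneg (inv_nonneg.2 ht.le),
      inv_mul_eq_div]
  rwa [heq] at h

lemma cube_finite_measure {x0 : En n} {r : ℝ} (hr : 0 ≤ r) :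
    volume (cube n x0 r) < ⊤ :=
  lt_of_le_of_lt (measure_mono (fun z hz => mem_closedBall_iff_norm.2
    (norm_le_of_mem_cube hr hz))) measure_closedBall_lt_top

lemma cube_volume_le {x0 : En n} {r : ℝ} (hr : 0 ≤ r) :
    (volume (cube n x0 r)).toReal ≤
      (Real.sqrt n * r / 2) ^ n * (volume (ball (0 : En n) 1)).toReal := by
  have h1 : volume (cube n x0 r) ≤ volume (closedBall x0 (Real.sqrt n * r / 2)) :=
    measure_mono fun z hz => mem_closedBall_iff_norm.2 (norm_le_of_mem_cube hr hz)
  have h2 : volume (closedBall x0 (Real.sqrt n * r / 2)) =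
      ENNReal.ofReal ((Real.sqrt n * r / 2) ^ n) * volume (ball (0 : En n) 1) := by
    rw [Measure.addHaar_closedBall volume x0 (by positivity),
      finrank_euclideanSpace_fin (𝕜 := ℝ)]
  calc (volume (cube n x0 r)).toReal
      ≤ (volume (closedBall x0 (Real.sqrt n * r / 2))).toReal := by
        refine ENNReal.toReal_mono ?_ h1
        rw [h2]
        exact ENNReal.mul_ne_top ENNReal.ofReal_ne_top measure_ball_lt_top.ne
    _ = (Real.sqrt n * r / 2) ^ n * (volume (ball (0 : En n) 1)).toReal := by
        rw [h2, ENNReal.toReal_mul, ENNReal.toReal_ofReal (by positivity)]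

lemma integrable_of_support_cube {f : En n → ℝ} (x0 : En n) {r : ℝ} (hr : 0 ≤ r)
    (hmeas : AEStronglyMeasurable f volume) (hzero : ∀ z, z ∉ cube n x0 r → f z = 0)
    {C : ℝ} (hbound : ∀ z, ‖f z‖ ≤ C) : Integrable f volume := by
  have hind : Set.indicator (cube n x0 r) f = f := by
    funext z
    by_cases hz : z ∈ cube n x0 r
    · rw [Set.indicator_of_mem hz]
    · rw [Set.indicator_of_notMem hz, hzero z hz]
  rw [← hind]
  refine (integrable_indicator_iff (cube_measurableSet x0 r)).2 ?_
  exact Measure.integrableOn_of_bounded (cube_finite_measure hr).ne hmeas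
    (Filter.Eventually.of_forall hbound)

/-- Key estimate: `A_α(b)(y,t) ≤ K t^{-(n+α)}`. -/
lemma Aalpha_le (hn : 1 ≤ n) (hα0 : 0 < α) (hα1 : α ≤ 1)
    {b : En n → ℝ} {M : ℝ} {x0 : En n} {r : ℝ} (hr : 0 < r)
    (hb : Measurable b) (hM : ∀ z, |b z| ≤ M)
    (hsupp : ∀ z, z ∉ cube n x0 r → b z = 0) (hmean : (∫ z, b z) = 0)
    {t : ℝ} (ht : 0 < t) (y : En n) :
    Aalpha n α b y t ≤ M * (Real.sqrt n * r / 2) ^ α *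
      ((Real.sqrt n * r / 2) ^ n * (volume (ball (0 : En n) 1)).toReal) *
      t ^ (-((n : ℝ) + α)) := by
  have hM0 : 0 ≤ M := le_trans (abs_nonneg _) (hM 0)
  have hRHS : 0 ≤ M * (Real.sqrt n * r / 2) ^ α *
      ((Real.sqrt n * r / 2) ^ n * (volume (ball (0 : En n) 1)).toReal) *
      t ^ (-((n : ℝ) + α)) := by
    have h1 : (0:ℝ) ≤ (Real.sqrt n * r / 2) ^ α := Real.rpow_nonneg (by positivity) α
    have h2 : (0:ℝ) ≤ t ^ (-((n : ℝ) + α)) := Real.rpow_nonneg ht.le _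
    have h3 : (0:ℝ) ≤ (Real.sqrt n * r / 2) ^ n := by positivity
    have h4 : (0:ℝ) ≤ (volume (ball (0 : En n) 1)).toReal := ENNReal.toReal_nonneg
    positivity
  refine Real.sSup_le ?_ hRHS
  rintro v ⟨φ, hφ, rfl⟩
  set c : ℝ := dilate n φ t (y - x0) with hc
  set F : En n → ℝ := fun z => b z * dilate n φ t (y - z) with hF
  -- measurability
  have hFm : AEStronglyMeasurable F volume :=
    (hb.aestronglyMeasurable.mul (dilate_continuous hα0 hφ y).aestronglyMeasurable)
  -- integrability of F
  have hdil_bd : ∀ w : En n, |dilate n φ t w| ≤ t ^ (-(n:ℝ)) * 4 := by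
    intro w
    unfold dilate
    rw [abs_mul, abs_of_nonneg (Real.rpow_nonneg ht.le _)]
    exact mul_le_mul_of_nonneg_left (calpha_abs_le hn hα0 hα1 hφ _)
      (Real.rpow_nonneg ht.le _)
  have hFint : Integrable F volume := by
    refine integrable_of_support_cube x0 hr.le hFm
      (fun z hz => by simp [hF, hsupp z hz]) (C := M * (t ^ (-(n:ℝ)) * 4)) ?_
    intro z
    rw [Real.norm_eq_abs, hF, abs_mul]
    exact mul_le_mul (hM z) (hdil_bd _) (abs_nonneg _) hM0
  -- integrability of b
  have hbint : Integrable b volume :=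
    integrable_of_support_cube x0 hr.le hb.aestronglyMeasurable hsupp
      (C := M) (fun z => hM z)
  -- reduce to the cube
  have e1 : (∫ z, F z) = ∫ z in cube n x0 r, F z :=
    (setIntegral_eq_integral_of_forall_compl_eq_zero
      (fun z hz => by simp [hF, hsupp z hz])).symm
  have e2 : (∫ z in cube n x0 r, b z * c) = 0 := by
    rw [integral_mul_const,
      setIntegral_eq_integral_of_forall_compl_eq_zero (fun z hz => hsupp z hz),
      hmean, zero_mul]
  have e3 : (∫ z in cube n x0 r, F z) =
      ∫ z in cube n x0 r, b z * (dilate n φ t (y - z) - c) := by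
    have h := integral_sub (hFint.integrableOn (s := cube n x0 r))
      ((hbint.integrableOn (s := cube n x0 r)).mul_const c)
    rw [e2, sub_zero] at h
    rw [← h]
    congr 1
    funext z
    simp only [hF]
    ring
  -- bound the integral over the cube
  set C0 : ℝ := M * (t ^ (-(n:ℝ)) * ((Real.sqrt n * r / 2) / t) ^ α) with hC0
  have hbd : ∀ z ∈ cube n x0 r, ‖b z * (dilate n φ t (y - z) - c)‖ ≤ C0 := by
    intro z hz
    rw [Real.norm_eq_abs, abs_mul]
    have h1 := dilate_sub_bound hα0 hφ ht (y - z) (y - x0)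
    have h2 : y - z - (y - x0) = x0 - z := by abel
    rw [h2] at h1
    have h3 : ‖x0 - z‖ ≤ Real.sqrt n * r / 2 := by
      rw [norm_sub_rev]; exact norm_le_of_mem_cube hr.le hz
    have h4 : (‖x0 - z‖ / t) ^ α ≤ ((Real.sqrt n * r / 2) / t) ^ α :=
      Real.rpow_le_rpow (by positivity) ((div_le_div_iff_of_pos_right ht).2 h3) hα0.le
    have h5 : |dilate n φ t (y - z) - c| ≤
        t ^ (-(n:ℝ)) * ((Real.sqrt n * r / 2) / t) ^ α :=
      h1.trans (mul_le_mul_of_nonneg_left h4 (Real.rpow_nonneg ht.le _))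
    rw [hC0]
    exact mul_le_mul (hM z) h5 (abs_nonneg _) hM0
  have hC00 : 0 ≤ C0 := by
    rw [hC0]
    have h6 : (0:ℝ) ≤ t ^ (-(n:ℝ)) := Real.rpow_nonneg ht.le _
    have h7 : (0:ℝ) ≤ ((Real.sqrt n * r / 2) / t) ^ α := Real.rpow_nonneg (by positivity) _
    exact mul_nonneg hM0 (mul_nonneg h6 h7)
  have hbound : ‖∫ z in cube n x0 r, b z * (dilate n φ t (y - z) - c)‖ ≤
      C0 * (volume (cube n x0 r)).toReal :=
    norm_setIntegral_le_of_norm_le_const_ae (cube_finite_measure hr.le)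
      ((ae_restrict_iff' (cube_measurableSet x0 r)).2 (Filter.Eventually.of_forall hbd))
  have harr : C0 * ((Real.sqrt n * r / 2) ^ n * (volume (ball (0 : En n) 1)).toReal) =
      M * (Real.sqrt n * r / 2) ^ α *
      ((Real.sqrt n * r / 2) ^ n * (volume (ball (0 : En n) 1)).toReal) *
      t ^ (-((n : ℝ) + α)) := by
    have h1 : ((Real.sqrt n * r / 2) / t) ^ α = (Real.sqrt n * r / 2) ^ α / t ^ α :=
      Real.div_rpow (by positivity) ht.le α
    have h2 : t ^ (-((n:ℝ) + α)) = t ^ (-(n:ℝ)) / t ^ α := by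
      rw [show -((n:ℝ) + α) = -(n:ℝ) - α by ring, Real.rpow_sub ht]
    rw [hC0, h1, h2]
    ring
  calc |∫ z, b z * dilate n φ t (y - z)|
      = ‖∫ z in cube n x0 r, b z * (dilate n φ t (y - z) - c)‖ := by
        rw [Real.norm_eq_abs, ← e3, ← e1]
    _ ≤ C0 * (volume (cube n x0 r)).toReal := hbound
    _ ≤ C0 * ((Real.sqrt n * r / 2) ^ n * (volume (ball (0 : En n) 1)).toReal) :=
        mul_le_mul_of_nonneg_left (cube_volume_le hr.le) hC00
    _ = _ := harr

end AuxLemmas2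
section AuxLemmas3

variable {n : ℕ} {α : ℝ}

/-- Vanishing of `A_α(b)(y,t)` for small `t` on the cone over `x`. -/
lemma Aalpha_eq_zero {b : En n → ℝ} {x0 : En n} {r : ℝ} (hr : 0 < r)
    (hsupp : ∀ z, z ∉ cube n x0 r → b z = 0) {x y : En n} {t : ℝ} (ht : 0 < t)
    (hD : Real.sqrt n * r < ‖x - x0‖) (hty : t ≤ ‖x - x0‖ / 4) (hy : y ∈ ball x t) :
    Aalpha n α b y t = 0 := by
  refine le_antisymm (Real.sSup_le ?_ le_rfl) (Aalpha_nonneg b y t)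
  rintro v ⟨φ, hφ, rfl⟩
  have hzero : ∀ z, b z * dilate n φ t (y - z) = 0 := by
    intro z
    by_cases hz : z ∈ cube n x0 r
    · have hz1 : ‖z - x0‖ ≤ Real.sqrt n * r / 2 := norm_le_of_mem_cube hr.le hz
      have hxy : ‖y - x‖ < t := by rwa [mem_ball, dist_eq_norm] at hy
      have hyz : t < ‖y - z‖ := by
        by_contra h
        push_neg at h
        have htri : ‖x - x0‖ ≤ ‖x - y‖ + ‖y - z‖ + ‖z - x0‖ := by
          calc ‖x - x0‖ = ‖(x - y) + (y - z) + (z - x0)‖ := by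
                congr 1; abel
            _ ≤ ‖(x - y) + (y - z)‖ + ‖z - x0‖ := norm_add_le _ _
            _ ≤ ‖x - y‖ + ‖y - z‖ + ‖z - x0‖ := by
                have := norm_add_le (x - y) (y - z); linarith
        rw [norm_sub_rev x y] at htri
        have h5 : Real.sqrt n * r / 2 < ‖x - x0‖ / 2 := by linarith
        linarith
      have hφ0 : φ (t⁻¹ • (y - z)) = 0 := by
        refine calpha_vanish hφ ?_
        rw [norm_smul, Real.norm_eq_abs, abs_of_nonneg (inv_nonneg.2 ht.le),
          inv_mul_eq_div]
        exact (one_lt_div ht).2 hyz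
      unfold dilate
      rw [hφ0, mul_zero, mul_zero]
    · rw [hsupp z hz, zero_mul]
  have : (∫ z, b z * dilate n φ t (y - z)) = 0 := by
    simp only [hzero, integral_zero]
  rw [this, abs_zero]

end AuxLemmas3
set_option maxHeartbeats 1000000 in
/-- Decay of the intrinsic square function of an atom-like function away from its cube. -/
theorem Salpha_atom_decay (n : ℕ) (α : ℝ) (hn : 1 ≤ n) (hα0 : 0 < α) (hα1 : α ≤ 1) :
    ∃ C > 0, ∀ (b : En n → ℝ) (M : ℝ) (x0 : En n) (r : ℝ),
      0 < r → Measurable b → (∀ z, |b z| ≤ M) →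
      (∀ z, z ∉ cube n x0 r → b z = 0) → (∫ z, b z) = 0 →
      ∀ x : En n, Real.sqrt n * r < ‖x - x0‖ →
        Salpha n α b x ≤ C * M * r ^ ((n : ℝ) + α) / ‖x - x0‖ ^ ((n : ℝ) + α) := by
  have hsα : 0 < (n : ℝ) + α := add_pos_of_nonneg_of_pos (Nat.cast_nonneg n) hα0
  set B1 : ℝ := (volume (ball (0 : En n) 1)).toReal with hB1
  have hB10 : 0 ≤ B1 := ENNReal.toReal_nonneg
  set c1 : ℝ := (Real.sqrt n / 2) ^ α * ((Real.sqrt n / 2) ^ n * B1) with hc1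
  have hc10 : 0 ≤ c1 := by
    have h1 : (0:ℝ) ≤ (Real.sqrt n / 2) ^ α := Real.rpow_nonneg (by positivity) _
    positivity
  set Q : ℝ := B1 * c1 ^ 2 * 16 ^ ((n : ℝ) + α) / (2 * ((n : ℝ) + α)) with hQ
  have hQ0 : 0 ≤ Q := by
    have h16 : (0:ℝ) ≤ (16:ℝ) ^ ((n : ℝ) + α) := Real.rpow_nonneg (by norm_num) _
    positivity
  refine ⟨Real.sqrt Q + 1, by positivity, ?_⟩
  intro b M x0 r hr hb hM hsupp hmean x hx
  have hM0 : 0 ≤ M := le_trans (abs_nonneg _) (hM 0)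
  set D : ℝ := ‖x - x0‖ with hDdef
  have hsqn : (1:ℝ) ≤ Real.sqrt n := by
    rw [show (1:ℝ) = Real.sqrt 1 by simp]
    exact Real.sqrt_le_sqrt (by exact_mod_cast hn)
  have hD0 : 0 < D := lt_trans (mul_pos (lt_of_lt_of_le one_pos hsqn) hr) hx
  set K : ℝ := M * (Real.sqrt n * r / 2) ^ α * ((Real.sqrt n * r / 2) ^ n * B1) with hK
  have hK0 : 0 ≤ K := by
    have h1 : (0:ℝ) ≤ (Real.sqrt n * r / 2) ^ α := Real.rpow_nonneg (by positivity) _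
    positivity
  set p : ℝ := -(2 * ((n : ℝ) + α)) - 1 with hp
  have hplt : p < -1 := by rw [hp]; linarith
  set Cst : ℝ := B1 * K ^ 2 with hCst
  set hfun : ℝ → ℝ := Set.indicator (Ioi (D / 4)) (fun t => Cst * t ^ p) with hh
  set g : ℝ → ℝ := fun t => ∫ y in ball x (1 * t), (Aalpha n α b y t) ^ 2 / t ^ (n + 1)
    with hg
  -- nonnegativity of g
  have hgnn : ∀ t ∈ Ioi (0:ℝ), 0 ≤ g t := by
    intro t ht
    rw [mem_Ioi] at ht
    exact setIntegral_nonneg measurableSet_ball fun y _ =>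
      div_nonneg (sq_nonneg _) (pow_nonneg ht.le _)
  -- pointwise domination g ≤ hfun on Ioi 0
  have hgle : ∀ t ∈ Ioi (0:ℝ), g t ≤ hfun t := by
    intro t htt
    rw [mem_Ioi] at htt
    by_cases hcase : D / 4 < t
    · -- main estimate
      have hA : ∀ y ∈ ball x (1 * t), ‖(Aalpha n α b y t) ^ 2 / t ^ (n + 1)‖ ≤
          (K * t ^ (-((n:ℝ) + α))) ^ 2 / t ^ (n + 1) := by
        intro y _
        rw [Real.norm_eq_abs, abs_div, abs_of_nonneg (sq_nonneg _),
          abs_of_nonneg (pow_nonneg htt.le _)]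
        have h1 : Aalpha n α b y t ≤ K * t ^ (-((n:ℝ) + α)) := by
          have h2 := Aalpha_le hn hα0 hα1 hr hb hM hsupp hmean htt y
          calc Aalpha n α b y t ≤ _ := h2
            _ = K * t ^ (-((n:ℝ) + α)) := by rw [hK]
        have h2 : (0:ℝ) ≤ Aalpha n α b y t := Aalpha_nonneg _ _ _
        exact (div_le_div_iff_of_pos_right (pow_pos htt _)).2 (pow_le_pow_left₀ h2 h1 2)
      have hnorm := norm_setIntegral_le_of_norm_le_const_ae
        (measure_ball_lt_top (μ := (volume : Measure (En n))) (x := x) (r := 1 * t))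
        ((ae_restrict_iff' measurableSet_ball).2 (Filter.Eventually.of_forall hA))
      have hvol : (volume (ball x (1 * t))).toReal = t ^ (n:ℕ) * B1 := by
        rw [one_mul, Measure.addHaar_ball_of_pos volume x htt,
          finrank_euclideanSpace_fin (𝕜 := ℝ), ENNReal.toReal_mul,
          ENNReal.toReal_ofReal (by positivity), hB1]
      have harith : (K * t ^ (-((n:ℝ) + α))) ^ 2 / t ^ (n + 1) * (t ^ (n:ℕ) * B1)
          = Cst * t ^ p := by
        have e1 : (t:ℝ) ^ (n + 1) = t ^ ((n:ℝ) + 1) := by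
          rw [← Real.rpow_natCast t (n + 1)]
          push_cast
          ring_nf
        have e2 : (t:ℝ) ^ (n:ℕ) = t ^ ((n:ℝ)) := (Real.rpow_natCast t n).symm
        have e3 : (K * t ^ (-((n:ℝ) + α))) ^ 2 = K ^ 2 * t ^ (-(2 * ((n:ℝ) + α))) := by
          rw [mul_pow]
          congr 1
          rw [sq, ← Real.rpow_add htt]
          congr 1
          ring
        have e4 : t ^ (-(2 * ((n:ℝ) + α))) / t ^ ((n:ℝ) + 1) * t ^ ((n:ℝ)) = t ^ p := by
          rw [← Real.rpow_sub htt, ← Real.rpow_add htt]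
          congr 1
          rw [hp]; ring
        rw [e1, e2, e3, hCst]
        calc K ^ 2 * t ^ (-(2 * ((n:ℝ) + α))) / t ^ ((n:ℝ) + 1) * (t ^ ((n:ℝ)) * B1)
            = B1 * K ^ 2 * (t ^ (-(2 * ((n:ℝ) + α))) / t ^ ((n:ℝ) + 1) * t ^ ((n:ℝ))) := by
              ring
          _ = B1 * K ^ 2 * t ^ p := by rw [e4]
      calc g t ≤ |g t| := le_abs_self _
        _ = ‖∫ y in ball x (1 * t), (Aalpha n α b y t) ^ 2 / t ^ (n + 1)‖ :=
            (Real.norm_eq_abs _).symm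
        _ ≤ (K * t ^ (-((n:ℝ) + α))) ^ 2 / t ^ (n + 1) * (volume (ball x (1 * t))).toReal :=
            hnorm
        _ = Cst * t ^ p := by rw [hvol]; exact harith
        _ = hfun t := by rw [hh, Set.indicator_of_mem (mem_Ioi.2 hcase)]
    · push_neg at hcase
      have hgz : g t = 0 := by
        simp only [hg]
        have heq : EqOn (fun y => (Aalpha n α b y t) ^ 2 / t ^ (n + 1))
            (fun _ => (0:ℝ)) (ball x (1 * t)) := by
          intro y hy
          rw [one_mul] at hy
          simp only
          rw [Aalpha_eq_zero hr hsupp htt hx hcase hy]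
          simp
        rw [setIntegral_congr_fun measurableSet_ball heq, integral_const, smul_zero]
      rw [hgz, hh, Set.indicator_of_notMem (by simpa using hcase)]
  -- integrability of the majorant
  have hIane : IntegrableOn (fun t => Cst * t ^ p) (Ioi (D / 4)) volume :=
    (integrableOn_Ioi_rpow_of_lt hplt (by positivity : (0:ℝ) < D / 4)).const_mul Cst
  have hIh : Integrable hfun (volume.restrict (Ioi (0:ℝ))) := by
    rw [hh]
    exact (hIane.integrable_indicator measurableSet_Ioi).restrict
  have hmono : (∫ t in Ioi (0:ℝ), g t) ≤ ∫ t in Ioi (0:ℝ), hfun t :=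
    integral_mono_of_nonneg
      ((ae_restrict_iff' measurableSet_Ioi).2 (Filter.Eventually.of_forall hgnn))
      hIh
      ((ae_restrict_iff' measurableSet_Ioi).2 (Filter.Eventually.of_forall hgle))
  have hcalc : (∫ t in Ioi (0:ℝ), hfun t) = Cst * (-(D / 4) ^ (p + 1) / (p + 1)) := by
    rw [hh, setIntegral_indicator measurableSet_Ioi,
      show Ioi (0:ℝ) ∩ Ioi (D / 4) = Ioi (D / 4) from
        inter_eq_right.2 (Ioi_subset_Ioi (by positivity)),
      integral_const_mul, integral_Ioi_rpow_of_lt hplt (by positivity)]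
  -- the final constant computation
  set a4 : ℝ := (4:ℝ) ^ ((n:ℝ) + α) with ha4
  have h40 : 0 < a4 := Real.rpow_pos_of_pos (by norm_num) _
  set aD : ℝ := (D / 4) ^ ((n:ℝ) + α) with haD
  have haD0 : 0 < aD := Real.rpow_pos_of_pos (by positivity) _
  have hd : D ^ ((n:ℝ) + α) = aD * a4 := by
    rw [haD, ha4, ← Real.mul_rpow (by positivity) (by norm_num)]
    congr 1
    field_simp
  have h16 : (16:ℝ) ^ ((n:ℝ) + α) = a4 * a4 := by
    rw [ha4, ← Real.mul_rpow (by norm_num) (by norm_num)]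
    norm_num
  have hpow : (D / 4) ^ (p + 1) = (aD * aD)⁻¹ := by
    rw [show p + 1 = -(((n:ℝ) + α) + ((n:ℝ) + α)) by rw [hp]; ring,
      Real.rpow_neg (by positivity), Real.rpow_add (by positivity), haD]
  have hKeq : K = c1 * M * r ^ ((n:ℝ) + α) := by
    rw [hK, hc1, show Real.sqrt n * r / 2 = Real.sqrt n / 2 * r by ring,
      Real.mul_rpow (by positivity) hr.le, mul_pow,
      show r ^ ((n:ℝ) + α) = r ^ (n:ℕ) * r ^ α by
        rw [Real.rpow_add hr, Real.rpow_natCast]]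
    ring
  have hQle : Q ≤ (Real.sqrt Q + 1) ^ 2 := by
    nlinarith [Real.sq_sqrt hQ0, Real.sqrt_nonneg Q]
  have hfinal : Cst * (-(D / 4) ^ (p + 1) / (p + 1)) ≤
      ((Real.sqrt Q + 1) * M * r ^ ((n:ℝ) + α) / D ^ ((n:ℝ) + α)) ^ 2 := by
    have hL : Cst * (-(D / 4) ^ (p + 1) / (p + 1)) =
        Q * (M ^ 2 * (r ^ ((n:ℝ) + α)) ^ 2 / (D ^ ((n:ℝ) + α)) ^ 2) := by
      rw [hCst, hKeq, hpow, hd, hQ, h16,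
        show p + 1 = -(2 * ((n:ℝ) + α)) by rw [hp]; ring]
      have hsne : ((n:ℝ) + α) ≠ 0 := hsα.ne'
      field_simp
    have hR : ((Real.sqrt Q + 1) * M * r ^ ((n:ℝ) + α) / D ^ ((n:ℝ) + α)) ^ 2 =
        (Real.sqrt Q + 1) ^ 2 * (M ^ 2 * (r ^ ((n:ℝ) + α)) ^ 2 / (D ^ ((n:ℝ) + α)) ^ 2) := by
      rw [hd]
      field_simp
    rw [hL, hR]
    refine mul_le_mul_of_nonneg_right hQle ?_
    have h1 : (0:ℝ) < (D ^ ((n:ℝ) + α)) ^ 2 := by rw [hd]; positivity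
    positivity
  -- put everything together
  have hS : Salpha n α b x = Real.sqrt (∫ t in Ioi (0:ℝ), g t) := rfl
  rw [hS]
  calc Real.sqrt (∫ t in Ioi (0:ℝ), g t)
      ≤ Real.sqrt (((Real.sqrt Q + 1) * M * r ^ ((n:ℝ) + α) / D ^ ((n:ℝ) + α)) ^ 2) :=
        Real.sqrt_le_sqrt (hmono.trans (hcalc.le.trans hfinal))
    _ = (Real.sqrt Q + 1) * M * r ^ ((n:ℝ) + α) / D ^ ((n:ℝ) + α) := by
        refine Real.sqrt_sq ?_
        have h1 : (0:ℝ) ≤ r ^ ((n:ℝ) + α) := Real.rpow_nonneg hr.le _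
        have h2 : (0:ℝ) < D ^ ((n:ℝ) + α) := Real.rpow_pos_of_pos hD0 _
        positivity

end
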